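/- Let G be a group, let a, g₁, …, g_n ∈ G be elements with a ≠ 1 of infinite order and g₁, …, g_n pairwise commuting, and let ν₁, …, ν_n : G → ℤ be homomorphisms with det(νᵢ(gⱼ)) ≠ 0 and νᵢ(a) = 0 for all i. If moreover a commutes with every gⱼ and ⟨a⟩ ∩ ⟨g₁, …, g_n⟩ = {1}, then the elements a, g₁, …, g_n generate a subgroup of G isomorphic to ℤ^{n+1}. -/

import Mathlib

/-- an infinite-order central element a together with commuting elements
g₁, …, g_n detected by homomorphisms νᵢ : G → ℤ with det(νᵢ(gⱼ)) ≠ 0, νᵢ(a) = 0 and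
⟨a⟩ ∩ ⟨g₁, …, g_n⟩ = 1 generate a subgroup isomorphic to ℤ^{n+1}. -/
theorem central_plus_commuting_gen_free_abelian (G : Type*) [Group G] (n : ℕ)
    (a : G) (g : Fin n → G) (ν : Fin n → G → ℤ)
    (ha1 : a ≠ 1) (hinf : ¬ IsOfFinOrder a)
    (hcomm : ∀ i j, Commute (g i) (g j))
    (hacomm : ∀ j, Commute a (g j))
    (hν : ∀ i a b, ν i (a * b) = ν i a + ν i b)
    (hdet : (Matrix.of fun i j => ν i (g j)).det ≠ 0)
    (hνa : ∀ i, ν i a = 0)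
    (hdisj : Subgroup.closure {a} ⊓ Subgroup.closure (Set.range g) = ⊥) :
    Nonempty (↥(Subgroup.closure (insert a (Set.range g))) ≃*
      Multiplicative (Fin (n + 1) → ℤ)) := by
  set S : Set G := insert a (Set.range g) with hS
  have hScomm : ∀ x ∈ S, ∀ y ∈ S, x * y = y * x := by
    rintro x hx y hy
    rcases hx with rfl | ⟨i, rfl⟩ <;> rcases hy with rfl | ⟨j, rfl⟩
    · rfl
    · exact hacomm j
    · exact (hacomm i).symm
    · exact hcomm i j
  letI : CommGroup (Subgroup.closure S) := Subgroup.closureCommGroupOfComm hScomm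
  have haS : a ∈ Subgroup.closure S :=
    Subgroup.subset_closure (Set.mem_insert _ _)
  have hgS : ∀ i, g i ∈ Subgroup.closure S := fun i =>
    Subgroup.subset_closure (Set.mem_insert_of_mem _ ⟨i, rfl⟩)
  set a' : Subgroup.closure S := ⟨a, haS⟩ with ha'
  set g' : Fin n → Subgroup.closure S := fun i => ⟨g i, hgS i⟩ with hg'
  -- the homomorphism ℤ^{n+1} → closure S
  set Φ : Multiplicative (Fin (n + 1) → ℤ) →* Subgroup.closure S :=
    MonoidHom.mk' (fun v => a' ^ (Multiplicative.toAdd v 0) *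
        ∏ i : Fin n, g' i ^ (Multiplicative.toAdd v i.succ))
      (by
        intro u v
        simp only [toAdd_mul, Pi.add_apply, zpow_add]
        rw [Finset.prod_mul_distrib, mul_mul_mul_comm]) with hΦ
  -- the ν's as monoid homs
  set f : Fin n → (G →* Multiplicative ℤ) := fun j =>
    MonoidHom.mk' (fun x => Multiplicative.ofAdd (ν j x))
      (by intro x y; simp [hν j x y]) with hf
  have hfint : ∀ j (x : G) (k : ℤ), Multiplicative.toAdd (f j (x ^ k)) = k * ν j x := by
    intro j x k
    rw [map_zpow]
    simp [hf]
  have hinj : Function.Injective Φ := by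
    intro u v huv
    have h1 : Φ (u * v⁻¹) = 1 := by rw [map_mul, huv, map_inv, mul_inv_cancel]
    set w : Fin (n + 1) → ℤ := Multiplicative.toAdd (u * v⁻¹) with hw
    have hH : a' ^ (w 0) * ∏ i : Fin n, g' i ^ (w i.succ) = 1 := h1
    have hsum : ∀ j, ∑ i : Fin n, ν j (g i) * w i.succ = 0 := by
      intro j
      set fj : (Subgroup.closure S) →* Multiplicative ℤ :=
        (f j).comp (Subgroup.subtype _) with hfj
      have := congrArg (fun x => Multiplicative.toAdd (fj x)) hH
      simp only [map_mul, map_one, map_prod, map_zpow, toAdd_mul, toAdd_prod,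
        toAdd_zpow, toAdd_one, smul_eq_mul] at this
      have hfja : Multiplicative.toAdd (fj a') = 0 := by simp [hfj, hf, ha', hνa j]
      have hfjg : ∀ i, Multiplicative.toAdd (fj (g' i)) = ν j (g i) := by
        intro i; simp [hfj, hf, hg']
      rw [hfja] at this
      simp only [hfjg, mul_zero, zero_add] at this
      simpa [mul_comm] using this
    have hw0 : (fun i : Fin n => w i.succ) = 0 := by
      apply Matrix.eq_zero_of_mulVec_eq_zero hdet
      funext j
      simpa [Matrix.mulVec, dotProduct] using hsum j
    have hwsucc : ∀ i : Fin n, w i.succ = 0 := fun i => congrFun hw0 i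
    have ha0' : a' ^ (w 0) = 1 := by
      simpa [hwsucc] using hH
    have ha0 : a ^ (w 0) = 1 := by
      have := congrArg (Subgroup.subtype _) ha0'
      simpa [ha'] using this
    have hw00 : w 0 = 0 := by
      by_contra h
      exact hinf (isOfFinOrder_iff_zpow_eq_one.2 ⟨w 0, h, ha0⟩)
    have hwz : w = 0 := by
      funext i
      refine Fin.cases ?_ ?_ i
      · exact hw00
      · exact hwsucc
    have huv1 : u * v⁻¹ = 1 := by
      have h2 : Multiplicative.toAdd (u * v⁻¹) = 0 := hwz
      simpa using congrArg Multiplicative.ofAdd h2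
    exact mul_inv_eq_one.mp huv1
  have hsurj : Function.Surjective Φ := by
    intro x
    have hrange : (Subgroup.closure S : Set G) ⊆
        Set.range ((Subgroup.subtype _).comp Φ) := by
      have : S ⊆ Set.range ((Subgroup.subtype _).comp Φ) := by
        rintro y (rfl | ⟨i, rfl⟩)
        · refine ⟨Multiplicative.ofAdd (Pi.single 0 1 : Fin (n+1) → ℤ), ?_⟩
          have h0 : ∀ i : Fin n, ((Pi.single 0 1 : Fin (n+1) → ℤ)) i.succ = 0 := by
            intro i
            exact Pi.single_eq_of_ne (Fin.succ_ne_zero i) 1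
          simp [hΦ, ha', h0]
        · refine ⟨Multiplicative.ofAdd ((Pi.single i.succ 1 : Fin (n+1) → ℤ)), ?_⟩
          have h0 : ((Pi.single i.succ 1 : Fin (n+1) → ℤ)) 0 = 0 :=
            Pi.single_eq_of_ne (Fin.succ_ne_zero i).symm 1
          have hprod : ∏ k : Fin n, g' k ^ (((Pi.single i.succ 1 : Fin (n+1) → ℤ)) k.succ)
              = g' i := by
            rw [Finset.prod_eq_single i]
            · simp
            · intro k _ hk
              rw [Pi.single_eq_of_ne (fun h => hk (Fin.succ_injective _ h)) 1, zpow_zero]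
            · intro h; exact absurd (Finset.mem_univ i) h
          simp only [hΦ, MonoidHom.comp_apply, MonoidHom.mk'_apply, toAdd_ofAdd, h0,
            zpow_zero, one_mul, hprod, Subgroup.coe_subtype]
          rfl
      have hle : Subgroup.closure S ≤ ((Subgroup.subtype _).comp Φ).range :=
        (Subgroup.closure_le _).2 this
      exact fun y hy => hle hy
    obtain ⟨v, hv⟩ := hrange x.2
    exact ⟨v, Subtype.ext (by simpa using hv)⟩
  exact ⟨(MulEquiv.ofBijective Φ ⟨hinj, hsurj⟩).symm⟩
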